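/- arXiv:1610.09607 — 7 statements merged into one kernel-verified Lean document; each statement's English description precedes it below -/
import Mathlib

section
/- Let x0, y0, u1, u2, c : ℤ with 2 ≤ u2 < u1, x0 ≤ −1, and y0 ≤ −1. Then there exists n : ℕ such that x0·u1^n − y0·u2^n < c. (Termination rule of §3.2.2 for two monotonically decreasing geometric updates with |u1| > |u2|.) -/
lemma succ_pow_ge (u : ℤ) (hu : 0 ≤ u) : ∀ n : ℕ, u ^ n + n * u ^ (n - 1) ≤ (u + 1) ^ n := by
  intro n
  induction n with
  | zero => simp
  | succ m ih =>
    have hpow : (0:ℤ) ≤ u ^ m := pow_nonneg hu m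
    have hpow' : (0:ℤ) ≤ u ^ (m - 1) := pow_nonneg hu _
    have hm : (0:ℤ) ≤ (m:ℤ) := Int.natCast_nonneg m
    have h2 : (u ^ m + m * u ^ (m - 1)) * (u + 1) ≤ (u + 1) ^ m * (u + 1) :=
      mul_le_mul_of_nonneg_right ih (by linarith)
    have h3 : (m:ℤ) * (u ^ (m - 1) * u) = m * u ^ m := by
      cases m with
      | zero => simp
      | succ k => simp [pow_succ]
    have hs : (u + 1) ^ (m + 1) = (u + 1) ^ m * (u + 1) := pow_succ _ _
    have hs2 : u ^ (m + 1) = u ^ m * u := pow_succ _ _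
    have hsub : m + 1 - 1 = m := rfl
    rw [hsub, hs, hs2]
    push_cast
    nlinarith [mul_nonneg hm hpow']

/-- Termination rule of §3.2.2 for two decreasing geometric updates with |u1| > |u2|. -/
theorem geom_geom_decreasing_terminating (x0 y0 u1 u2 c : ℤ)
    (hu2 : 2 ≤ u2) (hu : u2 < u1) (hx : x0 ≤ -1) (hy : y0 ≤ -1) :
    ∃ n : ℕ, x0 * u1 ^ n - y0 * u2 ^ n < c := by
  set C : ℤ := -y0 + |c| + 1 with hC
  have hCpos : 2 ≤ C := by have := abs_nonneg c; linarith
  set m : ℕ := ((C - 1) * u2).toNat with hm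
  refine ⟨m + 1, ?_⟩
  have hu2nn : (0:ℤ) ≤ u2 := by linarith
  have hu1nn : (0:ℤ) ≤ u2 + 1 := by linarith
  have hmge : (C - 1) * u2 ≤ (m : ℤ) := Int.self_le_toNat _
  have hupow : (0:ℤ) ≤ u2 ^ m := pow_nonneg hu2nn m
  -- u1^(m+1) ≥ (u2+1)^(m+1)
  have h1 : (u2 + 1) ^ (m+1) ≤ u1 ^ (m+1) :=
    pow_le_pow_left₀ hu1nn (by linarith) _
  have h2 : u2 ^ (m+1) + (↑(m+1)) * u2 ^ (m+1-1) ≤ (u2 + 1) ^ (m+1) :=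
    succ_pow_ge u2 hu2nn (m+1)
  have h3 : C * u2 ^ (m+1) ≤ u1 ^ (m+1) := by
    have hsub : m + 1 - 1 = m := rfl
    rw [hsub] at h2
    have : (C - 1) * u2 * u2 ^ m ≤ (↑(m+1)) * u2 ^ m := by
      apply mul_le_mul_of_nonneg_right _ hupow
      push_cast; linarith
    have hps : u2 ^ (m+1) = u2 ^ m * u2 := pow_succ u2 m
    nlinarith
  -- bound the expression
  have hxb : x0 * u1 ^ (m+1) ≤ -u1 ^ (m+1) := by
    have hp : (0:ℤ) ≤ u1 ^ (m+1) := pow_nonneg (by linarith) _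
    nlinarith
  have hpu2 : (1:ℤ) ≤ u2 ^ (m+1) := one_le_pow_iff_of_nonneg (by linarith) (Nat.succ_ne_zero m) |>.mpr (by linarith)
  have habs : -|c| ≤ c := neg_abs_le c
  nlinarith [hxb, h3, hpu2, habs, abs_nonneg c]
end

section
/- Let d, c1, v : ℤ with v ≥ 1 and d ≤ c1, and let n : ℤ with n ≥ 1 satisfy d + n·v > c1 and d + (n−1)·v ≤ c1 (i.e., d + n·v is the first value of the progression d, d+v, d+2v, … that exceeds c1). Then d + n·v = (c1 + v) − ((c1 − d) % v), where % denotes the remainder of integer division by v (taken in [0, v)). -/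
/-- Formula ψ_a of §4.1 (case ∼_B = '≤'): the first value of the
progression d, d+v, d+2v, … exceeding c1 equals (c1 + v) − ((c1 − d) % v). -/
theorem psi_a_formula (d c1 v n : ℤ)
    (hv : v ≥ 1) (hd : d ≤ c1) (hn : n ≥ 1)
    (hgt : d + n * v > c1) (hle : d + (n - 1) * v ≤ c1) :
    d + n * v = (c1 + v) - ((c1 - d) % v) := by
  have h := Int.emod_add_mul_ediv (c1 - d) v
  have hr0 := Int.emod_nonneg (c1 - d) (by omega : v ≠ 0)
  have hrlt := Int.emod_lt_of_pos (c1 - d) (by omega : 0 < v)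
  set r := (c1 - d) % v with hr
  set q := (c1 - d) / v with hq
  have hqe : q = n - 1 := by nlinarith [mul_le_mul_of_nonneg_right (le_of_lt (show q < n by nlinarith)) (show (0:ℤ) ≤ v by omega)]
  have : c1 - d = r + (n - 1) * v := by rw [← hqe]; linarith
  linarith [this]
end

section
/- Let d, c1, w : ℤ with w ≥ 1 and d ≥ c1, and let n : ℤ with n ≥ 1 satisfy d − n·w < c1 and d − (n−1)·w ≥ c1 (i.e., d − n·w is the first value of the progression d, d−w, d−2w, … that falls below c1). Then d − n·w = (c1 − w) + ((d − c1) % w), where % denotes the remainder of integer division by w (taken in [0, w)). -/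
/-- Formula ψ'_a of §4.1 (case ∼_B = '≥'): the first value of the
progression d, d−w, d−2w, … falling below c1 equals (c1 − w) + ((d − c1) % w). -/
theorem psi_a'_formula (d c1 w n : ℤ)
    (hw : w ≥ 1) (hd : d ≥ c1) (hn : n ≥ 1)
    (hlt : d - n * w < c1) (hge : d - (n - 1) * w ≥ c1) :
    d - n * w = (c1 - w) + ((d - c1) % w) := by
  have h1 : (d - c1) % w = (d - c1 - (n - 1) * w) % w := by
    conv_lhs => rw [show d - c1 = d - c1 - (n-1)*w + (n-1)*w by ring]
    rw [Int.add_mul_emod_self_right]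
  have h2 : (d - c1 - (n - 1) * w) % w = d - c1 - (n - 1) * w := by
    apply Int.emod_eq_of_lt <;> nlinarith
  nlinarith [h1, h2]
end

section
/- Let c, c1, b : ℤ, let f : ℤ → ℤ satisfy f(z) > z for all z (a monotonically increasing update), and let x : ℕ → ℤ satisfy x(n+1) = (if x(n) ≤ c1 then f(x(n)) else b). If x(0) ≥ c and b ≥ c, then x(n) ≥ c for every n : ℕ. (Soundness of the non-termination formula NT = (x0 ⊨ φ ∧ b ∼_φ c) of §4.1, case 1 / Table 3 rows 1–4: the multi-path loop 'while (x ≥ c) do { if (x ≤ c1) then x := f(x) else x := b }' is non-terminating under these conditions.) -/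
/-- Soundness of NT = (x0 ⊨ φ ∧ b ∼_φ c) of §4.1, case 1 / Table 3 rows 1–4:
`while (x ≥ c) do { if (x ≤ c1) then x := f(x) else x := b }` with f increasing. -/
theorem table3_rows1to4_nonterminating (c c1 b : ℤ) (f : ℤ → ℤ)
    (hf : ∀ z : ℤ, f z > z) (x : ℕ → ℤ)
    (hrec : ∀ n : ℕ, x (n + 1) = if x n ≤ c1 then f (x n) else b)
    (h0 : x 0 ≥ c) (hb : b ≥ c) :
    ∀ n : ℕ, x n ≥ c := by
  intro n
  induction n with
  | zero => exact h0
  | succ k ih =>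
    rw [hrec k]
    split
    · exact le_trans ih (le_of_lt (hf _))
    · exact hb
end

section
/- Let c, c1, b : ℤ, let f : ℤ → ℤ satisfy f(z) < z for all z (a monotonically decreasing update), and let x : ℕ → ℤ satisfy x(n+1) = (if x(n) ≤ c1 then f(x(n)) else b). If x(0) ≥ c, x(0) > c1, b ≥ c, and b > c1, then x(n) ≥ c for every n : ℕ. (Soundness of the non-termination formula NT = (x0 ⊨ φ ∧ x0 ⊭ B ∧ b ∼_φ c ∧ b ∼_{¬B} c1) of §4.1, case 2 / Table 3 rows 5–6: the multi-path loop 'while (x ≥ c) do { if (x ≤ c1) then x := f(x) else x := b }' is non-terminating under these conditions.) -/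
/-- Soundness of NT = (x0 ⊨ φ ∧ x0 ⊭ B ∧ b ∼_φ c ∧ b ∼_{¬B} c1) of §4.1,
case 2 / Table 3 rows 5–6: `while (x ≥ c) do { if (x ≤ c1) then x := f(x) else x := b }`
with f decreasing. -/
theorem table3_rows5to6_nonterminating (c c1 b : ℤ) (f : ℤ → ℤ)
    (hf : ∀ z : ℤ, f z < z) (x : ℕ → ℤ)
    (hrec : ∀ n : ℕ, x (n + 1) = if x n ≤ c1 then f (x n) else b)
    (h0 : x 0 ≥ c) (h0B : x 0 > c1) (hb : b ≥ c) (hbB : b > c1) :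
    ∀ n : ℕ, x n ≥ c := by
  have key : ∀ n : ℕ, x n ≥ c ∧ x n > c1 := by
    intro n
    induction n with
    | zero => exact ⟨h0, h0B⟩
    | succ k ih =>
      rw [hrec k, if_neg (not_le.mpr ih.2)]
      exact ⟨hb, hbB⟩
  exact fun n => (key n).1
end

section
/- Let c, c1, b : ℤ, let f : ℤ → ℤ satisfy f(z) < z for all z (a monotonically decreasing update), and let x : ℕ → ℤ satisfy x(n+1) = (if x(n) ≤ c1 then f(x(n)) else b). If either (x(0) ≤ c and x(0) ≤ c1) or (x(0) ≤ c and x(0) > c1 and b ≤ c), then x(n) ≤ c for every n : ℕ. (Soundness of the non-termination formula NT = ((x0 ⊨ φ ∧ x0 ⊨ B) ∨ (x0 ⊨ φ ∧ x0 ⊭ B ∧ b ∼_φ c)) of §4.1, case 4 / Table 3 rows 11–12: the multi-path loop 'while (x ≤ c) do { if (x ≤ c1) then x := f(x) else x := b }' is non-terminating under these conditions.) -/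
/-- Soundness of NT = ((x0 ⊨ φ ∧ x0 ⊨ B) ∨ (x0 ⊨ φ ∧ x0 ⊭ B ∧ b ∼_φ c))
of §4.1, case 4 / Table 3 rows 11–12:
`while (x ≤ c) do { if (x ≤ c1) then x := f(x) else x := b }` with f decreasing. -/
theorem table3_rows11to12_nonterminating (c c1 b : ℤ) (f : ℤ → ℤ)
    (hf : ∀ z : ℤ, f z < z) (x : ℕ → ℤ)
    (hrec : ∀ n : ℕ, x (n + 1) = if x n ≤ c1 then f (x n) else b)
    (h0 : (x 0 ≤ c ∧ x 0 ≤ c1) ∨ (x 0 ≤ c ∧ x 0 > c1 ∧ b ≤ c)) :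
    ∀ n : ℕ, x n ≤ c := by
  have key : ∀ n : ℕ, x n ≤ c ∧ (x n ≤ c1 ∨ (c1 < x n ∧ b ≤ c)) := by
    intro n
    induction n with
    | zero =>
      rcases h0 with ⟨h1, h2⟩ | ⟨h1, h2, h3⟩
      · exact ⟨h1, Or.inl h2⟩
      · exact ⟨h1, Or.inr ⟨h2, h3⟩⟩
    | succ n ih =>
      rcases ih with ⟨hc, hb | ⟨hgt, hbc⟩⟩
      · have : x (n + 1) = f (x n) := by rw [hrec n, if_pos hb]
        have hlt := hf (x n)
        constructor
        · omega
        · left; omega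
      · have : x (n + 1) = b := by rw [hrec n, if_neg (by omega)]
        constructor
        · omega
        · by_cases hb1 : b ≤ c1
          · left; omega
          · right; omega
  exact fun n => (key n).1
end

section
/- Let c, c1 : ℤ, let f, g : ℤ → ℤ satisfy f(z) > z and g(z) < z for all z (a monotonically increasing and a monotonically decreasing update), and let x : ℕ → ℤ satisfy x(n+1) = (if x(n) ≥ c1 then f(x(n)) else g(x(n))). If x(0) ≥ c and x(0) ≥ c1, then x(n) ≥ c for every n : ℕ. (Soundness of the non-termination formula NT = (x0 ⊨ φ ∧ x0 ⊨ B) of §4.2, case 1 / Table 3 row 17: the multi-path loop 'while (x ≥ c) do { if (x ≥ c1) then x := f(x) else x := g(x) }' with both update statements strictly monotone is non-terminating under these conditions.) -/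
/-- Soundness of NT = (x0 ⊨ φ ∧ x0 ⊨ B) of §4.2, case 1 / Table 3 row 17:
`while (x ≥ c) do { if (x ≥ c1) then x := f(x) else x := g(x) }` with f increasing and
g decreasing. -/
theorem table3_row17_nonterminating (c c1 : ℤ) (f g : ℤ → ℤ)
    (hf : ∀ z : ℤ, f z > z) (hg : ∀ z : ℤ, g z < z) (x : ℕ → ℤ)
    (hrec : ∀ n : ℕ, x (n + 1) = if x n ≥ c1 then f (x n) else g (x n))
    (h0 : x 0 ≥ c) (h0B : x 0 ≥ c1) :
    ∀ n : ℕ, x n ≥ c := by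
  have key : ∀ n : ℕ, x n ≥ c ∧ x n ≥ c1 := by
    intro n
    induction n with
    | zero => exact ⟨h0, h0B⟩
    | succ k ih =>
      have h := hrec k
      rw [if_pos ih.2] at h
      have := hf (x k)
      constructor <;> omega
  exact fun n => (key n).1
end
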